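/- Let Ω > 0 and λ ≠ 0 be real, β = 2Ω + √(4Ω² + λ²), c = (2λ² + 2β²)^{-1/2}, and define the smooth curves u⁴, u³ : [0, 2π] → ℂ⁴ by u⁴(θ) = c·(β e^{−iθ}, β, λ, λ e^{iθ}) and u³(θ) = c·(λ, λ e^{iθ}, −β e^{iθ}, −β e^{2iθ}) (the large-momentum limits of the normalized fourth- and third-band eigenvectors of the AB-stacked bulk Hamiltonian). Then the Berry-phase integrals satisfy (i/2π)∫₀^{2π} ⟨u⁴(θ), (u⁴)′(θ)⟩ dθ = (β² − λ²)/(2(λ² + β²)) and (i/2π)∫₀^{2π} ⟨u³(θ), (u³)′(θ)⟩ dθ = −(λ² + 3β²)/(2(λ² + β²)); in particular their sum equals −1. -/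

import Mathlib

open Complex

/-- Berry-phase circle integrals of the large-momentum limits of the normalized fourth-
and third-band eigenvectors of the AB-stacked gated bilayer bulk Hamiltonian:
with `β = 2Ω + √(4Ω² + λ²)` and `c = (2λ² + 2β²)^{-1/2}`,
`(i/2π)∫₀^{2π} ⟨u⁴, (u⁴)′⟩ dθ = (β² − λ²)/(2(λ² + β²))`,
`(i/2π)∫₀^{2π} ⟨u³, (u³)′⟩ dθ = −(λ² + 3β²)/(2(λ² + β²))`, and their sum is `−1`. -/
theorem berry_integrals_AB (Ω lam β c : ℝ) (hΩ : 0 < Ω) (hlam : lam ≠ 0)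
    (hβ : β = 2 * Ω + Real.sqrt (4 * Ω ^ 2 + lam ^ 2))
    (hc : c = (Real.sqrt (2 * lam ^ 2 + 2 * β ^ 2))⁻¹)
    (u4 u3 : ℝ → Fin 4 → ℂ)
    (hu4 : ∀ θ : ℝ, u4 θ = ![((c * β : ℝ) : ℂ) * Complex.exp (-Complex.I * θ),
      ((c * β : ℝ) : ℂ), ((c * lam : ℝ) : ℂ),
      ((c * lam : ℝ) : ℂ) * Complex.exp (Complex.I * θ)])
    (hu3 : ∀ θ : ℝ, u3 θ = ![((c * lam : ℝ) : ℂ),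
      ((c * lam : ℝ) : ℂ) * Complex.exp (Complex.I * θ),
      -((c * β : ℝ) : ℂ) * Complex.exp (Complex.I * θ),
      -((c * β : ℝ) : ℂ) * Complex.exp (2 * Complex.I * θ)]) :
    (Complex.I / (2 * Real.pi)) * ∫ θ in (0 : ℝ)..(2 * Real.pi),
        ∑ j : Fin 4, (starRingEnd ℂ) (u4 θ j) * deriv (fun t : ℝ => u4 t j) θ =
      (((β ^ 2 - lam ^ 2) / (2 * (lam ^ 2 + β ^ 2)) : ℝ) : ℂ) ∧
    (Complex.I / (2 * Real.pi)) * ∫ θ in (0 : ℝ)..(2 * Real.pi),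
        ∑ j : Fin 4, (starRingEnd ℂ) (u3 θ j) * deriv (fun t : ℝ => u3 t j) θ =
      -(((lam ^ 2 + 3 * β ^ 2) / (2 * (lam ^ 2 + β ^ 2)) : ℝ) : ℂ) ∧
    ((Complex.I / (2 * Real.pi)) * ∫ θ in (0 : ℝ)..(2 * Real.pi),
        ∑ j : Fin 4, (starRingEnd ℂ) (u4 θ j) * deriv (fun t : ℝ => u4 t j) θ) +
      ((Complex.I / (2 * Real.pi)) * ∫ θ in (0 : ℝ)..(2 * Real.pi),
        ∑ j : Fin 4, (starRingEnd ℂ) (u3 θ j) * deriv (fun t : ℝ => u3 t j) θ) = -1 := by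
  -- positivity facts
  have hβpos : 0 < β := by
    have h1 : 0 ≤ Real.sqrt (4 * Ω ^ 2 + lam ^ 2) := Real.sqrt_nonneg _
    rw [hβ]; linarith
  have hden : 0 < lam ^ 2 + β ^ 2 := by positivity
  have hc2 : c ^ 2 = (2 * lam ^ 2 + 2 * β ^ 2)⁻¹ := by
    rw [hc, inv_pow, Real.sq_sqrt (by positivity)]
  -- derivative of A * exp (a t)
  have hD : ∀ (a A : ℂ) (θ : ℝ), deriv (fun t : ℝ => A * Complex.exp (a * t)) θ
      = A * (a * Complex.exp (a * θ)) := by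
    intro a A θ
    have h := (((hasDerivAt_id θ).ofReal_comp.const_mul a).cexp.const_mul A)
    simp only [id_eq] at h
    rw [h.deriv]; push_cast; ring
  have hcj : ∀ z : ℂ, (starRingEnd ℂ) (Complex.exp z) = Complex.exp ((starRingEnd ℂ) z) :=
    fun z => (Complex.exp_conj z).symm
  -- the integrands are constant
  have k4 : ∀ θ : ℝ, (∑ j : Fin 4, (starRingEnd ℂ) (u4 θ j) * deriv (fun t : ℝ => u4 t j) θ)
      = Complex.I * ((((c*lam)^2 - (c*β)^2 : ℝ)) : ℂ) := by
    intro θ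
    simp only [hu4, Fin.sum_univ_four, Matrix.cons_val_zero, Matrix.cons_val_one,
      Matrix.head_cons, Matrix.cons_val_two, Matrix.tail_cons, Matrix.cons_val_three]
    rw [hD, hD, deriv_const, deriv_const]
    simp only [map_mul, map_inv₀, hcj, Complex.conj_ofReal, map_neg, Complex.conj_I,
      mul_zero, add_zero, neg_mul, neg_neg, Complex.exp_neg, inv_inv]
    field_simp [Complex.exp_ne_zero]
    push_cast; ring
  have k3 : ∀ θ : ℝ, (∑ j : Fin 4, (starRingEnd ℂ) (u3 θ j) * deriv (fun t : ℝ => u3 t j) θ)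
      = Complex.I * ((((c*lam)^2 + 3*(c*β)^2 : ℝ)) : ℂ) := by
    intro θ
    simp only [hu3, Fin.sum_univ_four, Matrix.cons_val_zero, Matrix.cons_val_one,
      Matrix.head_cons, Matrix.cons_val_two, Matrix.tail_cons, Matrix.cons_val_three]
    rw [hD, hD, hD, deriv_const]
    simp only [show ∀ t : ℝ, (2 * Complex.I * (t:ℂ)) = Complex.I * t + Complex.I * t from
      fun t => by ring, Complex.exp_add]
    simp only [map_mul, map_inv₀, hcj, Complex.conj_ofReal, map_neg, Complex.conj_I,
      mul_zero, zero_add, neg_mul, neg_neg, Complex.exp_neg, inv_inv]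
    field_simp [Complex.exp_ne_zero]
    push_cast; ring
  -- evaluate the integrals
  have vv : ∀ k : ℝ, (Complex.I / (2 * Real.pi)) *
      (∫ _ in (0 : ℝ)..(2 * Real.pi), Complex.I * ((k : ℝ) : ℂ)) = ((-k : ℝ) : ℂ) := by
    intro k
    rw [intervalIntegral.integral_const, sub_zero, real_smul]
    have hπ : ((Real.pi : ℂ)) ≠ 0 := by exact_mod_cast Real.pi_ne_zero
    push_cast
    field_simp
    linear_combination (k : ℂ) * Complex.I_sq
  have i4 : (Complex.I / (2 * Real.pi)) * (∫ θ in (0 : ℝ)..(2 * Real.pi),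
      ∑ j : Fin 4, (starRingEnd ℂ) (u4 θ j) * deriv (fun t : ℝ => u4 t j) θ)
      = ((-((c*lam)^2 - (c*β)^2) : ℝ) : ℂ) := by
    rw [show (∫ θ in (0 : ℝ)..(2 * Real.pi),
        ∑ j : Fin 4, (starRingEnd ℂ) (u4 θ j) * deriv (fun t : ℝ => u4 t j) θ)
      = ∫ _ in (0 : ℝ)..(2 * Real.pi), Complex.I * ((((c*lam)^2 - (c*β)^2 : ℝ)) : ℂ) from
        intervalIntegral.integral_congr (fun θ _ => k4 θ)]
    exact vv _
  have i3 : (Complex.I / (2 * Real.pi)) * (∫ θ in (0 : ℝ)..(2 * Real.pi),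
      ∑ j : Fin 4, (starRingEnd ℂ) (u3 θ j) * deriv (fun t : ℝ => u3 t j) θ)
      = ((-((c*lam)^2 + 3*(c*β)^2) : ℝ) : ℂ) := by
    rw [show (∫ θ in (0 : ℝ)..(2 * Real.pi),
        ∑ j : Fin 4, (starRingEnd ℂ) (u3 θ j) * deriv (fun t : ℝ => u3 t j) θ)
      = ∫ _ in (0 : ℝ)..(2 * Real.pi), Complex.I * ((((c*lam)^2 + 3*(c*β)^2 : ℝ)) : ℂ) from
        intervalIntegral.integral_congr (fun θ _ => k3 θ)]
    have := vv ((c*lam)^2 + 3*(c*β)^2)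
    rw [this]
  -- real arithmetic
  have r4 : (-((c*lam)^2 - (c*β)^2) : ℝ) = (β ^ 2 - lam ^ 2) / (2 * (lam ^ 2 + β ^ 2)) := by
    rw [mul_pow, mul_pow, hc2, show (2*(lam^2+β^2):ℝ) = 2*lam^2+2*β^2 from by ring,
      div_eq_mul_inv]
    ring
  have r3 : (-((c*lam)^2 + 3*(c*β)^2) : ℝ) = -((lam ^ 2 + 3 * β ^ 2) / (2 * (lam ^ 2 + β ^ 2))) := by
    rw [mul_pow, mul_pow, hc2, show (2*(lam^2+β^2):ℝ) = 2*lam^2+2*β^2 from by ring,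
      div_eq_mul_inv]
    ring
  have h1 : (Complex.I / (2 * Real.pi)) * (∫ θ in (0 : ℝ)..(2 * Real.pi),
      ∑ j : Fin 4, (starRingEnd ℂ) (u4 θ j) * deriv (fun t : ℝ => u4 t j) θ)
      = (((β ^ 2 - lam ^ 2) / (2 * (lam ^ 2 + β ^ 2)) : ℝ) : ℂ) := by
    rw [i4, r4]
  have h2 : (Complex.I / (2 * Real.pi)) * (∫ θ in (0 : ℝ)..(2 * Real.pi),
      ∑ j : Fin 4, (starRingEnd ℂ) (u3 θ j) * deriv (fun t : ℝ => u3 t j) θ)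
      = -(((lam ^ 2 + 3 * β ^ 2) / (2 * (lam ^ 2 + β ^ 2)) : ℝ) : ℂ) := by
    rw [i3, r3]; push_cast; ring
  refine ⟨h1, h2, ?_⟩
  rw [h1, h2]
  rw [← Complex.ofReal_neg, ← Complex.ofReal_add]
  have : ((β ^ 2 - lam ^ 2) / (2 * (lam ^ 2 + β ^ 2))
      + -((lam ^ 2 + 3 * β ^ 2) / (2 * (lam ^ 2 + β ^ 2))) : ℝ) = -1 := by
    field_simp
    ring
  rw [this]; norm_num
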